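/- A bounded set A ⊆ ℝ is a Cantorval if and only if A is regularly closed (A equals the closure of its interior) and the boundary of A is homeomorphic to the Cantor set (i.e., the boundary is a nonempty compact perfect nowhere dense set). -/
import Mathlib


open Set MeasureTheory Pointwise

/-- The achievement set (set of all subsums) of the series `∑ a n`. -/
noncomputable def achievementSet (a : ℕ → ℝ) : Set ℝ :=
  {x | ∃ I : Set ℕ, HasSum (fun i : I => a i) x}

/-- `tail a n` is the sum of the terms with index `≥ n`. -/
noncomputable def tail (a : ℕ → ℝ) (n : ℕ) : ℝ := ∑' i : ℕ, a (n + i)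

/-- The set of `k`-initial subsums: sums over subsets of the first `k` terms. -/
def Fset (a : ℕ → ℝ) (k : ℕ) : Set ℝ :=
  {x | ∃ I : Finset ℕ, I ⊆ Finset.range k ∧ x = ∑ i ∈ I, a i}

/-- The `k`-th iterate `I_k = ⋃_{f ∈ F_k} [f, f + r_k]`. -/
noncomputable def iter (a : ℕ → ℝ) (k : ℕ) : Set ℝ :=
  ⋃ f ∈ Fset a k, Set.Icc f (f + tail a k)

/-- A Cantor set: a nonempty compact perfect nowhere dense subset of `ℝ`. -/
def IsCantorSet (C : Set ℝ) : Prop :=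
  C.Nonempty ∧ IsCompact C ∧ Perfect C ∧ interior C = ∅

/-- A Cantorval: a nonempty compact set equal to the closure of its interior such that
both endpoints of every nontrivial connected component are accumulation points of
trivial (one-point) components. -/
def IsCantorval (P : Set ℝ) : Prop :=
  P.Nonempty ∧ IsCompact P ∧ P = closure (interior P) ∧
  ∀ x ∈ P, (connectedComponentIn P x).Nontrivial →
    ∀ y ∈ ({sInf (connectedComponentIn P x), sSup (connectedComponentIn P x)} : Set ℝ),
      ∀ ε > 0, ∃ z ∈ P, z ≠ y ∧ |z - y| < ε ∧ connectedComponentIn P z = {z}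


private lemma notCountable_funBool : ¬ Countable (ℕ → Bool) := by
  intro h
  have e : Set ℕ ≃ (ℕ → Bool) := Equiv.arrowCongr (Equiv.refl ℕ) Equiv.propEquivBool
  have : Countable (Set ℕ) := Countable.of_equiv _ e.symm
  obtain ⟨g, hg⟩ := Countable.exists_injective_nat (Set ℕ)
  exact Function.cantor_injective g hg

private lemma perfect_not_countable {C : Set ℝ} (h : Perfect C) (hne : C.Nonempty) :
    ¬ C.Countable := by
  intro hc
  obtain ⟨f, hrange, -, hinj⟩ := h.exists_nat_bool_injection hne
  have h1 : (Set.range f).Countable := hc.mono hrange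
  have := h1.to_subtype
  exact notCountable_funBool (Countable.of_equiv _ (Equiv.ofInjective f hinj).symm)

private lemma mem_frontier_of_singleton {A : Set ℝ} {z : ℝ} (hz : z ∈ A)
    (h : connectedComponentIn A z = {z}) : z ∈ frontier A := by
  rw [← closure_diff_interior]
  refine ⟨subset_closure hz, fun hint => ?_⟩
  rw [mem_interior_iff_mem_nhds, Metric.mem_nhds_iff] at hint
  obtain ⟨ε, hε, hball⟩ := hint
  have hsub : Metric.ball z ε ⊆ connectedComponentIn A z := by
    rw [Real.ball_eq_Ioo]
    exact isPreconnected_Ioo.subset_connectedComponentIn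
      (by rw [← Real.ball_eq_Ioo]; exact Metric.mem_ball_self hε)
      (by rw [← Real.ball_eq_Ioo]; exact hball)
  have h2 : z + ε / 2 ∈ Metric.ball z ε := by
    rw [Metric.mem_ball, Real.dist_eq, abs_of_pos (by linarith : (0:ℝ) < z + ε / 2 - z)]
    linarith
  have := hsub h2
  rw [h, mem_singleton_iff] at this
  linarith

private lemma frontier_endpoint {A : Set ℝ} (hbb : BddBelow A) (hba : BddAbove A)
    {x z : ℝ} (hx : x ∈ A) (hzT : z ∈ connectedComponentIn A x) (hzf : z ∈ frontier A) :
    z = sInf (connectedComponentIn A x) ∨ z = sSup (connectedComponentIn A x) := by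
  set T := connectedComponentIn A x with hT
  have hTsub : T ⊆ A := connectedComponentIn_subset A x
  have hTne : T.Nonempty := ⟨x, mem_connectedComponentIn hx⟩
  have hTbb : BddBelow T := hbb.mono hTsub
  have hTba : BddAbove T := hba.mono hTsub
  have h1 : sInf T ≤ z := csInf_le hTbb hzT
  have h2 : z ≤ sSup T := le_csSup hTba hzT
  by_contra hcon
  push_neg at hcon
  obtain ⟨hne1, hne2⟩ := hcon
  obtain ⟨c, hc, hcz⟩ := exists_lt_of_csInf_lt hTne (lt_of_le_of_ne h1 (Ne.symm hne1))
  obtain ⟨d, hd, hzd⟩ := exists_lt_of_lt_csSup hTne (lt_of_le_of_ne h2 hne2)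
  have hIcc : Icc c d ⊆ T := isPreconnected_connectedComponentIn.Icc_subset hc hd
  have hzint : z ∈ interior A := by
    rw [mem_interior_iff_mem_nhds]
    exact Filter.mem_of_superset (Ioo_mem_nhds hcz hzd)
      (fun w hw => hTsub (hIcc (Ioo_subset_Icc_self hw)))
  rw [← closure_diff_interior] at hzf
  exact hzf.2 hzint

private lemma exists_frontier_right {A : Set ℝ} (hcl : IsClosed A) {t y : ℝ}
    (ht : t ∉ A) (hy : y ∈ A) (hty : t < y) : ∃ z ∈ frontier A, t < z ∧ z ≤ y := by
  set S := A ∩ Icc t y with hS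
  have hSne : S.Nonempty := ⟨y, hy, le_of_lt hty, le_refl y⟩
  have hSbb : BddBelow S := bddBelow_Icc.mono inter_subset_right
  have hScl : IsClosed S := hcl.inter isClosed_Icc
  have hzS : sInf S ∈ S := hScl.csInf_mem hSne hSbb
  set z := sInf S with hz
  have hzA : z ∈ A := hzS.1
  have htz : t < z := lt_of_le_of_ne hzS.2.1 (fun h => ht (h ▸ hzA))
  refine ⟨z, ?_, htz, hzS.2.2⟩
  rw [← closure_diff_interior]
  refine ⟨subset_closure hzA, fun hint => ?_⟩
  rw [mem_interior_iff_mem_nhds, Metric.mem_nhds_iff] at hint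
  obtain ⟨δ, hδ, hball⟩ := hint
  set w := max ((t + z) / 2) (z - δ / 2) with hw
  have hw1 : t < w := lt_max_of_lt_left (by linarith)
  have hw2 : w < z := max_lt (by linarith) (by linarith)
  have hwd : z - δ / 2 ≤ w := le_max_right _ _
  have hwA : w ∈ A := hball (by
    rw [Metric.mem_ball, Real.dist_eq, abs_of_neg (by linarith : w - z < 0)]
    linarith)
  have hwS : w ∈ S := ⟨hwA, le_of_lt hw1, le_trans (le_of_lt hw2) hzS.2.2⟩
  exact absurd (csInf_le hSbb hwS) (not_le.2 hw2)

private lemma exists_frontier_left {A : Set ℝ} (hcl : IsClosed A) {t y : ℝ}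
    (ht : t ∉ A) (hy : y ∈ A) (hty : y < t) : ∃ z ∈ frontier A, y ≤ z ∧ z < t := by
  set S := A ∩ Icc y t with hS
  have hSne : S.Nonempty := ⟨y, hy, le_refl y, le_of_lt hty⟩
  have hSba : BddAbove S := bddAbove_Icc.mono inter_subset_right
  have hScl : IsClosed S := hcl.inter isClosed_Icc
  have hzS : sSup S ∈ S := hScl.csSup_mem hSne hSba
  set z := sSup S with hz
  have hzA : z ∈ A := hzS.1
  have hzt : z < t := lt_of_le_of_ne hzS.2.2 (fun h => ht (h ▸ hzA))
  refine ⟨z, ?_, hzS.2.1, hzt⟩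
  rw [← closure_diff_interior]
  refine ⟨subset_closure hzA, fun hint => ?_⟩
  rw [mem_interior_iff_mem_nhds, Metric.mem_nhds_iff] at hint
  obtain ⟨δ, hδ, hball⟩ := hint
  set w := min ((z + t) / 2) (z + δ / 2) with hw
  have hw1 : w < t := min_lt_of_left_lt (by linarith)
  have hw2 : z < w := lt_min (by linarith) (by linarith)
  have hwd : w ≤ z + δ / 2 := min_le_right _ _
  have hwA : w ∈ A := hball (by
    rw [Metric.mem_ball, Real.dist_eq, abs_of_pos (by linarith : (0:ℝ) < w - z)]
    linarith)
  have hwS : w ∈ S := ⟨hwA, le_trans hzS.2.1 (le_of_lt hw2), le_of_lt hw1⟩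
  exact absurd (le_csSup hSba hwS) (not_le.2 hw2)

private lemma endpoint_mem_frontier {A : Set ℝ} (hcl : IsClosed A) (hbb : BddBelow A)
    (hba : BddAbove A) {x y : ℝ} (hx : x ∈ A)
    (hy : y = sInf (connectedComponentIn A x) ∨ y = sSup (connectedComponentIn A x)) :
    y ∈ frontier A := by
  set T := connectedComponentIn A x with hT
  have hTsub : T ⊆ A := connectedComponentIn_subset A x
  have hTne : T.Nonempty := ⟨x, mem_connectedComponentIn hx⟩
  have hTbb : BddBelow T := hbb.mono hTsub
  have hTba : BddAbove T := hba.mono hTsub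
  have hyA : y ∈ A := by
    rcases hy with rfl | rfl
    · have := closure_mono hTsub (csInf_mem_closure hTne hTbb)
      rwa [hcl.closure_eq] at this
    · have := closure_mono hTsub (csSup_mem_closure hTne hTba)
      rwa [hcl.closure_eq] at this
  rw [← closure_diff_interior]
  refine ⟨subset_closure hyA, fun hint => ?_⟩
  rw [mem_interior_iff_mem_nhds, Metric.mem_nhds_iff] at hint
  obtain ⟨δ, hδ, hball⟩ := hint
  rcases hy with hy | hy
  · obtain ⟨c, hcT, hc⟩ := exists_lt_of_csInf_lt hTne
      (show sInf T < y + δ / 2 by rw [← hy]; linarith)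
    have hyc : y ≤ c := hy ▸ csInf_le hTbb hcT
    have hIcc : Icc (y - δ / 2) c ⊆ A := by
      intro u hu
      apply hball
      rw [Metric.mem_ball, Real.dist_eq, abs_lt]
      constructor
      · linarith [hu.1]
      · linarith [hu.2]
    have hU : IsPreconnected (T ∪ Icc (y - δ / 2) c) :=
      IsPreconnected.union c hcT ⟨by linarith, le_refl c⟩
        isPreconnected_connectedComponentIn isPreconnected_Icc
    have hsub2 : T ∪ Icc (y - δ / 2) c ⊆ T :=
      hU.subset_connectedComponentIn (Or.inl (mem_connectedComponentIn hx))
        (union_subset hTsub hIcc)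
    have hmem : y - δ / 2 ∈ T := hsub2 (Or.inr ⟨le_refl _, by linarith⟩)
    have := csInf_le hTbb hmem
    rw [← hy] at this
    linarith
  · obtain ⟨c, hcT, hc⟩ := exists_lt_of_lt_csSup hTne
      (show y - δ / 2 < sSup T by rw [← hy]; linarith)
    have hyc : c ≤ y := hy ▸ le_csSup hTba hcT
    have hIcc : Icc c (y + δ / 2) ⊆ A := by
      intro u hu
      apply hball
      rw [Metric.mem_ball, Real.dist_eq, abs_lt]
      constructor
      · linarith [hu.1]
      · linarith [hu.2]
    have hU : IsPreconnected (T ∪ Icc c (y + δ / 2)) :=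
      IsPreconnected.union c hcT ⟨le_refl c, by linarith⟩
        isPreconnected_connectedComponentIn isPreconnected_Icc
    have hsub2 : T ∪ Icc c (y + δ / 2) ⊆ T :=
      hU.subset_connectedComponentIn (Or.inl (mem_connectedComponentIn hx))
        (union_subset hTsub hIcc)
    have hmem : y + δ / 2 ∈ T := hsub2 (Or.inr ⟨by linarith, le_refl _⟩)
    have := le_csSup hTba hmem
    rw [← hy] at this
    linarith

private lemma countable_endpoints {A : Set ℝ} (hbb : BddBelow A) (hba : BddAbove A) :
    {z : ℝ | z ∈ frontier A ∧ z ∈ A ∧ (connectedComponentIn A z).Nontrivial}.Countable := by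
  classical
  set S := {z : ℝ | z ∈ frontier A ∧ z ∈ A ∧ (connectedComponentIn A z).Nontrivial} with hS
  set f : ℝ → ℚ × Prop := fun z =>
    (if h : ∃ q : ℚ, (q : ℝ) ∈ connectedComponentIn A z then h.choose else 0,
     z = sInf (connectedComponentIn A z)) with hf
  have key : ∀ z ∈ S, ∃ q : ℚ, (q : ℝ) ∈ connectedComponentIn A z := by
    rintro z ⟨-, hzA, hnt⟩
    obtain ⟨a, ha, b, hb, hab⟩ := hnt
    rcases hab.lt_or_gt with h | h
    · obtain ⟨q, hq1, hq2⟩ := exists_rat_btwn h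
      exact ⟨q, isPreconnected_connectedComponentIn.Icc_subset ha hb ⟨le_of_lt hq1, le_of_lt hq2⟩⟩
    · obtain ⟨q, hq1, hq2⟩ := exists_rat_btwn h
      exact ⟨q, isPreconnected_connectedComponentIn.Icc_subset hb ha ⟨le_of_lt hq1, le_of_lt hq2⟩⟩
  have hinj : InjOn f S := by
    rintro z₁ hz₁ z₂ hz₂ hf12
    have h1 := key z₁ hz₁
    have h2 := key z₂ hz₂
    have hq1 : ((h1.choose : ℚ) : ℝ) ∈ connectedComponentIn A z₁ := h1.choose_spec
    have hq2 : ((h2.choose : ℚ) : ℝ) ∈ connectedComponentIn A z₂ := h2.choose_spec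
    have hfst : h1.choose = h2.choose := by
      have := congrArg Prod.fst hf12
      simpa [hf, dif_pos h1, dif_pos h2] using this
    have hTT : connectedComponentIn A z₁ = connectedComponentIn A z₂ := by
      rw [connectedComponentIn_eq hq1, connectedComponentIn_eq hq2, hfst]
    have he1 := frontier_endpoint hbb hba hz₁.2.1 (mem_connectedComponentIn hz₁.2.1) hz₁.1
    have he2 := frontier_endpoint hbb hba hz₂.2.1 (mem_connectedComponentIn hz₂.2.1) hz₂.1
    have hsnd : (z₁ = sInf (connectedComponentIn A z₁)) = (z₂ = sInf (connectedComponentIn A z₂)) :=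
      congrArg Prod.snd hf12
    rw [hTT] at he1 hsnd
    by_cases hcase : z₁ = sInf (connectedComponentIn A z₂)
    · have : z₂ = sInf (connectedComponentIn A z₂) := by
        rw [eq_iff_iff] at hsnd
        exact hsnd.1 hcase
      exact hcase.trans this.symm
    · have he1' : z₁ = sSup (connectedComponentIn A z₂) := he1.resolve_left hcase
      have hcase2 : ¬ z₂ = sInf (connectedComponentIn A z₂) := by
        rw [eq_iff_iff] at hsnd
        exact fun h => hcase (hsnd.2 h)
      have he2' : z₂ = sSup (connectedComponentIn A z₂) := he2.resolve_left hcase2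
      exact he1'.trans he2'.symm
  exact MapsTo.countable_of_injOn (mapsTo_univ f S) hinj countable_univ


/-- A bounded set A is a Cantorval iff it is regularly closed and its
boundary is a Cantor set (nonempty compact perfect nowhere dense). -/
theorem stmt_2 (A : Set ℝ) (hA : Bornology.IsBounded A) :
    IsCantorval A ↔ A = closure (interior A) ∧ IsCantorSet (frontier A) := by
  have hbb := hA.bddBelow
  have hba := hA.bddAbove
  constructor
  · rintro ⟨hne, hcomp, hreg, hend⟩
    have hcl : IsClosed A := hcomp.isClosed
    have hfne : (frontier A).Nonempty := by
      rw [nonempty_iff_ne_empty]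
      intro h
      rcases frontier_eq_empty_iff.1 h with h | h
      · exact hne.ne_empty h
      · exact not_bddAbove_univ (h ▸ hba)
    have hif : interior (frontier A) = ∅ := by
      rw [eq_empty_iff_forall_notMem]
      intro x hx
      have hxA : x ∈ A := hcl.frontier_subset (interior_subset hx)
      rw [hreg, mem_closure_iff] at hxA
      obtain ⟨w, hw1, hw2⟩ := hxA _ isOpen_interior hx
      have hwf : w ∈ frontier A := interior_subset hw1
      rw [← closure_diff_interior] at hwf
      exact hwf.2 hw2
    have hperf : Perfect (frontier A) := by
      refine ⟨isClosed_frontier, preperfect_iff_nhds.2 ?_⟩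
      intro x hxf U hU
      obtain ⟨ε, hε, hball⟩ := Metric.mem_nhds_iff.1 hU
      have hxA : x ∈ A := hcl.frontier_subset hxf
      by_cases hnt : (connectedComponentIn A x).Nontrivial
      · have hx_end := frontier_endpoint hbb hba hxA (mem_connectedComponentIn hxA) hxf
        have hxpair : x ∈ ({sInf (connectedComponentIn A x),
            sSup (connectedComponentIn A x)} : Set ℝ) := by
          rcases hx_end with h | h
          · exact mem_insert_iff.2 (Or.inl h)
          · exact mem_insert_iff.2 (Or.inr h)
        obtain ⟨z, hzA, hzx, hzd, hzcomp⟩ := hend x hxA hnt x hxpair ε hε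
        refine ⟨z, ⟨hball ?_, mem_frontier_of_singleton hzA hzcomp⟩, hzx⟩
        rw [Metric.mem_ball, Real.dist_eq]
        exact hzd
      · have hxcomp : connectedComponentIn A x = {x} :=
          (not_nontrivial_iff.1 hnt).eq_singleton_of_mem (mem_connectedComponentIn hxA)
        have hxcl : x ∈ closure (interior A) := by rw [← hreg]; exact hxA
        obtain ⟨w, hw1, hw2⟩ :=
          (mem_closure_iff.1 hxcl) _ Metric.isOpen_ball (Metric.mem_ball_self hε)
        have hwx : w ≠ x := by
          rintro rfl
          rw [← closure_diff_interior] at hxf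
          exact hxf.2 hw2
        have hwball : |w - x| < ε := by rw [← Real.dist_eq]; exact hw1
        rcases hwx.lt_or_gt with hlt | hlt
        · obtain ⟨t, ht1, ht2, htA⟩ : ∃ t, w < t ∧ t < x ∧ t ∉ A := by
            by_contra hcon
            push_neg at hcon
            have hIcc : Icc w x ⊆ A := by
              intro u hu
              rcases eq_or_lt_of_le hu.1 with rfl | h1
              · exact interior_subset hw2
              rcases eq_or_lt_of_le hu.2 with rfl | h2
              · exact hxA
              exact hcon u h1 h2
            have hsub := isPreconnected_Icc.subset_connectedComponentIn
              (show x ∈ Icc w x from ⟨le_of_lt hlt, le_refl x⟩) hIcc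
            rw [hxcomp] at hsub
            exact hwx (mem_singleton_iff.1 (hsub ⟨le_refl w, le_of_lt hlt⟩))
          obtain ⟨z, hzf, hz1, hz2⟩ := exists_frontier_left hcl htA (interior_subset hw2) ht1
          have hwxn : w - x < 0 := by linarith
          rw [abs_of_neg hwxn] at hwball
          refine ⟨z, ⟨hball ?_, hzf⟩, ne_of_lt (by linarith)⟩
          rw [Metric.mem_ball, Real.dist_eq, abs_of_neg (by linarith : z - x < 0)]
          linarith
        · obtain ⟨t, ht1, ht2, htA⟩ : ∃ t, x < t ∧ t < w ∧ t ∉ A := by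
            by_contra hcon
            push_neg at hcon
            have hIcc : Icc x w ⊆ A := by
              intro u hu
              rcases eq_or_lt_of_le hu.1 with rfl | h1
              · exact hxA
              rcases eq_or_lt_of_le hu.2 with rfl | h2
              · exact interior_subset hw2
              exact hcon u h1 h2
            have hsub := isPreconnected_Icc.subset_connectedComponentIn
              (show x ∈ Icc x w from ⟨le_refl x, le_of_lt hlt⟩) hIcc
            rw [hxcomp] at hsub
            exact hwx (mem_singleton_iff.1 (hsub ⟨le_of_lt hlt, le_refl w⟩))
          obtain ⟨z, hzf, hz1, hz2⟩ := exists_frontier_right hcl htA (interior_subset hw2) ht2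
          have hwxp : 0 < w - x := by linarith
          rw [abs_of_pos hwxp] at hwball
          refine ⟨z, ⟨hball ?_, hzf⟩, (ne_of_lt (by linarith : x < z)).symm⟩
          rw [Metric.mem_ball, Real.dist_eq, abs_of_pos (by linarith : (0:ℝ) < z - x)]
          linarith
    exact ⟨hreg, hfne, hcomp.of_isClosed_subset isClosed_frontier hcl.frontier_subset, hperf, hif⟩
  · rintro ⟨hreg, hfne, hfcpt, hfperf, hfint⟩
    have hcl : IsClosed A := hreg ▸ isClosed_closure
    have hAne : A.Nonempty := by
      obtain ⟨p, hp⟩ := hfne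
      exact ⟨p, hcl.frontier_subset hp⟩
    refine ⟨hAne, Metric.isCompact_of_isClosed_isBounded hcl hA, hreg, ?_⟩
    intro x hx hnt y hy ε hε
    have hy' : y = sInf (connectedComponentIn A x) ∨ y = sSup (connectedComponentIn A x) := by
      simpa using hy
    have hyf : y ∈ frontier A := endpoint_mem_frontier hcl hbb hba hx hy'
    by_contra hcon
    push_neg at hcon
    have hsubS : ∀ z, z ∈ frontier A → z ≠ y → |z - y| < ε →
        z ∈ {z : ℝ | z ∈ frontier A ∧ z ∈ A ∧ (connectedComponentIn A z).Nontrivial} := by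
      intro z hzf hzy hzd
      have hzA : z ∈ A := hcl.frontier_subset hzf
      refine ⟨hzf, hzA, ?_⟩
      by_contra hsub
      exact hcon z hzA hzy hzd
        ((not_nontrivial_iff.1 hsub).eq_singleton_of_mem (mem_connectedComponentIn hzA))
    obtain ⟨hDperf, hDne⟩ := hfperf.closure_nhds_inter y hyf
      (Metric.mem_ball_self (half_pos hε)) Metric.isOpen_ball
    have hDsub : closure (Metric.ball y (ε / 2) ∩ frontier A) ⊆
        insert y {z : ℝ | z ∈ frontier A ∧ z ∈ A ∧ (connectedComponentIn A z).Nontrivial} := by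
      intro z hz
      have hzf : z ∈ frontier A := by
        have h1 : closure (Metric.ball y (ε / 2) ∩ frontier A) ⊆ closure (frontier A) :=
          closure_mono inter_subset_right
        rw [isClosed_frontier.closure_eq] at h1
        exact h1 hz
      have hzd : |z - y| < ε := by
        have h1 := closure_mono (inter_subset_left
          (s := Metric.ball y (ε / 2)) (t := frontier A)) hz
        have h2 := Metric.closure_ball_subset_closedBall h1
        rw [Metric.mem_closedBall, Real.dist_eq] at h2
        linarith
      by_cases hzy : z = y
      · exact mem_insert_iff.2 (Or.inl hzy)
      · exact mem_insert_iff.2 (Or.inr (hsubS z hzf hzy hzd))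
    have hcnt : (closure (Metric.ball y (ε / 2) ∩ frontier A)).Countable :=
      Set.Countable.mono hDsub (Set.Countable.insert y (countable_endpoints hbb hba))
    exact perfect_not_countable hDperf hDne hcnt
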